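/- Let M be a maximum-weight c-matching in a capacitated graph G, and let P be a proper M-augmenting walk that repeats some edge, with t the least index such that e_t = e_s for some s < t, and suppose P traverses e_s and e_t in the same direction. Writing P = (P_1, e_s, P_2, e_t, P_3), the closed trail (e_s, P_2, e_t) is M-alternating of even length and is not M-augmenting, and consequently (P_1, e_s, P_3) is a strictly shorter proper M-augmenting walk. -/

import Mathlib

variable {V : Type*}

/-- Degree of a vertex with respect to an edge set. -/
def degOn [DecidableEq V] (M : Finset (Sym2 V)) (v : V) : ℕ :=
  (M.filter (fun e => v ∈ e)).card

/-- Total weight of an edge set. -/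
def wsum (w : Sym2 V → ℝ) (M : Finset (Sym2 V)) : ℝ := ∑ e ∈ M, w e

/-- A `c`-matching: a set of edges of `G` with every vertex degree at most its capacity. -/
def IsCMatching [DecidableEq V] (G : SimpleGraph V) (c : V → ℕ) (M : Finset (Sym2 V)) : Prop :=
  (∀ e ∈ M, e ∈ G.edgeSet) ∧ ∀ v, degOn M v ≤ c v

/-- A maximum-weight `c`-matching. -/
def IsMaxCMatching [DecidableEq V] (G : SimpleGraph V) (w : Sym2 V → ℝ) (c : V → ℕ)
    (M : Finset (Sym2 V)) : Prop :=
  IsCMatching G c M ∧ ∀ N, IsCMatching G c N → wsum w N ≤ wsum w M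

/-- A list of edges is `M`-alternating if consecutive edges alternate
between `M` and its complement. -/
def Alternating [DecidableEq V] (M : Finset (Sym2 V)) (l : List (Sym2 V)) : Prop :=
  l.Chain' (fun e f => (e ∈ M ↔ f ∉ M))

/-- Weight (with multiplicity) of the matched edges of a list. -/
def matchedWeight [DecidableEq V] (w : Sym2 V → ℝ) (M : Finset (Sym2 V))
    (l : List (Sym2 V)) : ℝ :=
  ((l.filter (fun e => decide (e ∈ M))).map w).sum

/-- Weight (with multiplicity) of the unmatched edges of a list. -/
def unmatchedWeight [DecidableEq V] (w : Sym2 V → ℝ) (M : Finset (Sym2 V))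
    (l : List (Sym2 V)) : ℝ :=
  ((l.filter (fun e => decide (e ∉ M))).map w).sum

/-- `M`-augmenting: `w(l \ M) > w(l ∩ M)` (multiplicities counted). -/
def Augmenting [DecidableEq V] (w : Sym2 V → ℝ) (M : Finset (Sym2 V)) (l : List (Sym2 V)) : Prop :=
  matchedWeight w M l < unmatchedWeight w M l

/-- Fractional degree `Σ_{e ∈ δ(v)} x_e`. -/
def lpDeg [Fintype V] [DecidableEq V] (x : Sym2 V → ℝ) (v : V) : ℝ :=
  ∑ e : Sym2 V, if v ∈ e then x e else 0

/-- A fractional `c`-matching. -/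
def IsFracCMatching [Fintype V] [DecidableEq V] (G : SimpleGraph V) (c : V → ℕ)
    (x : Sym2 V → ℝ) : Prop :=
  (∀ e, 0 ≤ x e ∧ x e ≤ 1) ∧ (∀ e, e ∉ G.edgeSet → x e = 0) ∧ ∀ v, lpDeg x v ≤ (c v : ℝ)

/-- LP objective value `w^T x`. -/
def lpVal [Fintype V] (w x : Sym2 V → ℝ) : ℝ := ∑ e : Sym2 V, w e * x e

/-- `ν^c(G)`: maximum weight of a `c`-matching. -/
noncomputable def nuC [Fintype V] [DecidableEq V] (G : SimpleGraph V) (w : Sym2 V → ℝ)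
    (c : V → ℕ) : ℝ :=
  sSup {r | ∃ M, IsCMatching G c M ∧ r = wsum w M}

/-- `ν_f^c(G)`: optimum of the fractional `c`-matching LP. -/
noncomputable def nuF [Fintype V] [DecidableEq V] (G : SimpleGraph V) (w : Sym2 V → ℝ)
    (c : V → ℕ) : ℝ :=
  sSup {r | ∃ x, IsFracCMatching G c x ∧ r = lpVal w x}

/-- A capacitated graph is stable if `ν^c(G) = ν_f^c(G)`. -/
def Stable [Fintype V] [DecidableEq V] (G : SimpleGraph V) (w : Sym2 V → ℝ) (c : V → ℕ) : Prop :=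
  nuC G w c = nuF G w c

/-- The ε-augmentation `x^{M/W}(ε)` of a walk. -/
def epsAug [DecidableEq V] {G : SimpleGraph V} {u v : V} (M : Finset (Sym2 V))
    (p : G.Walk u v) (ε : ℝ) : Sym2 V → ℝ :=
  fun e => if e ∈ M then 1 - (p.edges.count e : ℝ) * ε else (p.edges.count e : ℝ) * ε

/-- Symmetric difference of edge sets. -/
def symmDiffE [DecidableEq V] (M T : Finset (Sym2 V)) : Finset (Sym2 V) := (M \ T) ∪ (T \ M)

/-- The list of (undirected) edges underlying a list of darts. -/
def edgesOf {V : Type*} (l : List (V × V)) : List (Sym2 V) := l.map (fun d => s(d.1, d.2))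

/-- A list of darts forms a walk in `G`. -/
def IsWalkList {V : Type*} (G : SimpleGraph V) (l : List (V × V)) : Prop :=
  (∀ d ∈ l, G.Adj d.1 d.2) ∧ l.Chain' (fun d d' => d.2 = d'.1)

/-- Number of occurrences (with multiplicity) at `v` of edges of the walk whose
membership in `M` is `inM`. -/
def occAt {V : Type*} [DecidableEq V] (M : Finset (Sym2 V)) (l : List (V × V)) (v : V)
    (inM : Bool) : ℕ :=
  ((edgesOf l).filter (fun e => decide (e ∈ M) == inM)).countP (fun e => decide (v ∈ e))

/-- Properness of a walk at an endpoint `v`: `d_v^{W △ M} ≤ c_v`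
(multiplicities of repeated edges counted). -/
def ProperEnd {V : Type*} [DecidableEq V] (M : Finset (Sym2 V)) (c : V → ℕ)
    (l : List (V × V)) (v : V) : Prop :=
  (degOn M v : ℤ) + (occAt M l v false : ℤ) - (occAt M l v true : ℤ) ≤ (c v : ℤ)

/-- The inverse of a dart-list walk. -/
def invWalk {V : Type*} (l : List (V × V)) : List (V × V) := (l.map Prod.swap).reverse

lemma edgesOf_append (l₁ l₂ : List (V × V)) : edgesOf (l₁ ++ l₂) = edgesOf l₁ ++ edgesOf l₂ := by
  simp [edgesOf]

lemma alt_parity [DecidableEq V] (M : Finset (Sym2 V)) (l : List (Sym2 V))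
    (h : Alternating M l) :
    ∀ k i (hik : i + k < l.length),
      (l.get ⟨i + k, hik⟩ ∈ M ↔ (Odd k ↔ l.get ⟨i, by omega⟩ ∉ M)) := by
  intro k
  induction k with
  | zero =>
    intro i hik
    simp only [Nat.add_zero, Nat.odd_iff]
    norm_num
  | succ k ih =>
    intro i hik
    have h1 := ih i (by omega)
    have h2 := List.isChain_iff_getElem.mp h (i + k) (by omega)
    simp only [List.get_eq_getElem] at h1 ⊢
    simp only [show i + (k+1) = i + k + 1 from by omega]
    have h3 := Nat.odd_add_one (n := k)
    constructor
    · intro hm; tauto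
    · intro hm; tauto

lemma alt_closed_even [DecidableEq V] (M : Finset (Sym2 V)) (x : Sym2 V) (B : List (Sym2 V))
    (h : Alternating M (x :: B ++ [x])) : Even (B.length + 1) := by
  have hlen : (x :: B ++ [x]).length = B.length + 2 := by simp
  have h0 : (x :: B ++ [x]).get ⟨0, by simp⟩ = x := rfl
  have h1 : (x :: B ++ [x]).get ⟨0 + (B.length + 1), by omega⟩ = x := by
    simp only [show 0 + (B.length + 1) = B.length + 1 from by omega, List.get_eq_getElem]
    show (x :: B ++ [x])[B.length+1]'(by simpa using by omega) = x
    rw [List.getElem_append_right (by simp)]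
    simp
  have := alt_parity M _ h (B.length + 1) 0 (by omega)
  rw [h0, h1] at this
  rw [Nat.not_odd_iff_even.symm]
  tauto

lemma occAt_append [DecidableEq V] (M : Finset (Sym2 V)) (l₁ l₂ : List (V × V)) (v : V)
    (b : Bool) : occAt M (l₁ ++ l₂) v b = occAt M l₁ v b + occAt M l₂ v b := by
  simp [occAt, edgesOf, List.filter_append, List.countP_append]

lemma occAt_single [DecidableEq V] (M : Finset (Sym2 V)) (d : V × V) (v : V) (b : Bool) :
    occAt M [d] v b = if decide (s(d.1, d.2) ∈ M) = b then (if v ∈ s(d.1, d.2) then 1 else 0)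
      else 0 := by
  by_cases hb : decide (s(d.1, d.2) ∈ M) = b <;>
    by_cases hv : v ∈ s(d.1, d.2) <;>
      simp [occAt, edgesOf, List.filter_cons, List.countP_cons, hb, hv]

lemma ind_split [DecidableEq V] (v a c : V) (hd : a ≠ c) :
    (if v ∈ s(a, c) then (1:ℤ) else 0) = (if v = a then 1 else 0) + (if v = c then 1 else 0) := by
  by_cases h : v = a <;> by_cases h' : v = c
  · exact absurd (h.symm.trans h') hd
  · rw [if_pos (Sym2.mem_iff.mpr (Or.inl h)), if_pos h, if_neg h']; ring
  · rw [if_pos (Sym2.mem_iff.mpr (Or.inr h')), if_neg h, if_pos h']; ring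
  · rw [if_neg (fun hm => ((Sym2.mem_iff.mp hm).elim h h')), if_neg h, if_neg h']; ring

lemma key_balance [DecidableEq V] (M : Finset (Sym2 V)) (v : V) :
    ∀ (l : List (V × V)) (d : V × V),
    (∀ d' ∈ d :: l, d'.1 ≠ d'.2) →
    List.Chain' (fun a b => a.2 = b.1) (d :: l) →
    Alternating M (edgesOf (d :: l)) →
    (occAt M (d :: l) v (decide (s(d.1, d.2) ∈ M)) : ℤ)
      - occAt M (d :: l) v (!decide (s(d.1, d.2) ∈ M))
    = (if v = d.1 then 1 else 0)
      + (-1 : ℤ) ^ l.length * (if v = ((d :: l).getLast (by simp)).2 then 1 else 0) := by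
  intro l
  induction l with
  | nil =>
    intro d hnd _ _
    have hd : d.1 ≠ d.2 := hnd d (by simp)
    have h1 : occAt M [d] v (decide (s(d.1, d.2) ∈ M)) = if v ∈ s(d.1, d.2) then 1 else 0 := by
      rw [occAt_single]; simp
    have h2 : occAt M [d] v (!decide (s(d.1, d.2) ∈ M)) = 0 := by
      rw [occAt_single]; simp
    rw [h1, h2]
    have hsplit := ind_split v d.1 d.2 hd
    push_cast
    rw [hsplit]
    simp only [List.getLast, List.length_nil, pow_zero, one_mul, mul_one]
    simp only [sub_zero]; congr
  | cons d' l' ih =>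
    intro d hnd hchain halt
    have hlink : d.2 = d'.1 := hchain.rel_head
    have haltstep : (s(d.1, d.2) ∈ M ↔ s(d'.1, d'.2) ∉ M) := halt.rel_head
    have hb' : decide (s(d'.1, d'.2) ∈ M) = !decide (s(d.1, d.2) ∈ M) := by
      by_cases h : s(d.1, d.2) ∈ M <;> simp_all
    have ih' := ih d' (fun x hx => hnd x (by simp_all)) hchain.tail (by
      have : edgesOf (d :: d' :: l') = s(d.1,d.2) :: edgesOf (d' :: l') := rfl
      rw [this] at halt
      exact halt.tail)
    set b := decide (s(d.1, d.2) ∈ M) with hbdef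
    have e1 : occAt M (d :: d' :: l') v b = occAt M [d] v b + occAt M (d' :: l') v b :=
      occAt_append M [d] (d' :: l') v b
    have e2 : occAt M (d :: d' :: l') v (!b)
        = occAt M [d] v (!b) + occAt M (d' :: l') v (!b) :=
      occAt_append M [d] (d' :: l') v (!b)
    have h1 : occAt M [d] v b = if v ∈ s(d.1, d.2) then 1 else 0 := by
      rw [occAt_single]; simp [hbdef]
    have h2 : occAt M [d] v (!b) = 0 := by
      rw [occAt_single]; simp [hbdef]
    rw [hb'] at ih'
    simp only [Bool.not_not] at ih'
    have hg : ((d :: d' :: l').getLast (by simp)) = ((d' :: l').getLast (by simp)) := by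
      simp [List.getLast]
    have hd : d.1 ≠ d.2 := hnd d (by simp)
    have hsplit := ind_split v d.1 d.2 hd
    have hld : (if v = d.2 then (1:ℤ) else 0) = (if v = d'.1 then 1 else 0) := by rw [hlink]
    rw [e1, e2, h1, h2, hg]
    rw [show ((d' :: l').length) = l'.length + 1 from rfl, pow_succ]
    push_cast
    rw [hsplit, hld]
    linarith [ih']

lemma occ_bal [DecidableEq V] (M : Finset (Sym2 V)) (l : List (V × V)) (hne : l ≠ [])
    (hnd : ∀ d ∈ l, d.1 ≠ d.2) (hchain : List.Chain' (fun a b => a.2 = b.1) l)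
    (halt : Alternating M (edgesOf l)) (hclose : (l.head hne).1 = (l.getLast hne).2)
    (heven : Even l.length) (v : V) : occAt M l v true = occAt M l v false := by
  obtain ⟨d, l', rfl⟩ := List.exists_cons_of_ne_nil hne
  have hkey := key_balance M v l' d hnd hchain halt
  have hodd : Odd l'.length := by
    rcases heven with ⟨k, hk⟩
    simp only [List.length_cons] at hk
    exact ⟨k - 1, by omega⟩
  rw [hodd.neg_one_pow] at hkey
  have hhead : ((d :: l').head hne) = d := rfl
  rw [hhead] at hclose
  have hclose' : d.1 = ((d :: l').getLast (by simp)).2 := hclose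
  rw [← hclose'] at hkey
  have : (occAt M (d :: l') v (decide (s(d.1, d.2) ∈ M)) : ℤ)
      = occAt M (d :: l') v (!decide (s(d.1, d.2) ∈ M)) := by
    linarith [hkey]
  rcases Bool.eq_false_or_eq_true (decide (s(d.1, d.2) ∈ M)) with hb | hb <;>
    rw [hb] at this <;> simp at this <;> omega

lemma countP_eq_card {α : Type*} [DecidableEq α] (L : List α) (h : L.Nodup) (p : α → Bool) :
    L.countP p = (L.toFinset.filter (fun a => p a = true)).card := by
  rw [← List.toFinset_filter, List.toFinset_card_of_nodup (h.filter p),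
    List.countP_eq_length_filter]

lemma occAt_true_card [DecidableEq V] (M : Finset (Sym2 V)) (l : List (V × V))
    (h : (edgesOf l).Nodup) (v : V) :
    occAt M l v true = (((edgesOf l).toFinset ∩ M).filter (fun e => v ∈ e)).card := by
  rw [occAt, List.countP_filter, countP_eq_card _ h]
  congr 1
  ext e
  simp only [Finset.mem_filter, List.mem_toFinset, Finset.mem_inter, Bool.and_eq_true,
    decide_eq_true_eq, beq_iff_eq, decide_eq_true_iff]
  tauto

lemma occAt_false_card [DecidableEq V] (M : Finset (Sym2 V)) (l : List (V × V))
    (h : (edgesOf l).Nodup) (v : V) :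
    occAt M l v false = (((edgesOf l).toFinset \ M).filter (fun e => v ∈ e)).card := by
  rw [occAt, List.countP_filter, countP_eq_card _ h]
  congr 1
  ext e
  by_cases hm : e ∈ M <;> by_cases hv : v ∈ e <;> simp [hm, hv]


lemma matched_eq_sum [DecidableEq V] (w : Sym2 V → ℝ) (M : Finset (Sym2 V))
    (L : List (Sym2 V)) (h : L.Nodup) :
    matchedWeight w M L = ∑ e ∈ L.toFinset ∩ M, w e := by
  rw [matchedWeight, ← List.sum_toFinset w (h.filter _), List.toFinset_filter,
    ← Finset.filter_mem_eq_inter]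
  congr 1
  ext e
  simp

lemma unmatched_eq_sum [DecidableEq V] (w : Sym2 V → ℝ) (M : Finset (Sym2 V))
    (L : List (Sym2 V)) (h : L.Nodup) :
    unmatchedWeight w M L = ∑ e ∈ L.toFinset \ M, w e := by
  rw [unmatchedWeight, ← List.sum_toFinset w (h.filter _), List.toFinset_filter,
    Finset.sdiff_eq_filter]
  congr 1
  ext e
  simp

lemma disj_aux {α : Type*} [DecidableEq α] (M C : Finset α) : Disjoint (M \ C) (M ∩ C) :=
  Finset.sdiff_disjoint.mono_right Finset.inter_subset_right

lemma cycle_not_aug [DecidableEq V] {G : SimpleGraph V} {w : Sym2 V → ℝ} (c : V → ℕ)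
    {M : Finset (Sym2 V)} (hMmax : IsMaxCMatching G w c M)
    (l : List (V × V)) (hne : l ≠ []) (hadj : ∀ d ∈ l, G.Adj d.1 d.2)
    (hchain : List.Chain' (fun a b => a.2 = b.1) l) (halt : Alternating M (edgesOf l))
    (hclose : (l.head hne).1 = (l.getLast hne).2) (heven : Even l.length)
    (hnodup : (edgesOf l).Nodup) : ¬ Augmenting w M (edgesOf l) := by
  intro haug
  set C := (edgesOf l).toFinset with hC
  set N := (M \ C) ∪ (C \ M) with hN
  have hbal := fun v => occ_bal M l hne (fun d hd => (hadj d hd).ne) hchain halt hclose heven v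
  have hNmatch : IsCMatching G c N := by
    constructor
    · intro e he
      rcases Finset.mem_union.mp he with h | h
      · exact hMmax.1.1 e (Finset.mem_sdiff.mp h).1
      · have : e ∈ edgesOf l := List.mem_toFinset.mp (Finset.mem_sdiff.mp h).1
        obtain ⟨d, hd, rfl⟩ := List.mem_map.mp this
        exact (hadj d hd)
    · intro v
      have h1 : degOn N v = ((M \ C).filter (fun e => v ∈ e)).card
          + ((C \ M).filter (fun e => v ∈ e)).card := by
        rw [degOn, hN, Finset.filter_union,
          Finset.card_union_of_disjoint (Finset.disjoint_filter_filter disjoint_sdiff_sdiff)]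
      have h2 : degOn M v = ((M \ C).filter (fun e => v ∈ e)).card
          + ((M ∩ C).filter (fun e => v ∈ e)).card := by
        rw [degOn]
        conv_lhs => rw [← Finset.sdiff_union_inter M C]
        rw [Finset.filter_union,
          Finset.card_union_of_disjoint (Finset.disjoint_filter_filter (disj_aux M C))]
      have h3 : ((C \ M).filter (fun e => v ∈ e)).card
          = ((M ∩ C).filter (fun e => v ∈ e)).card := by
        have hb := (hbal v).symm
        rw [occAt_true_card M l hnodup, occAt_false_card M l hnodup, ← hC,
          Finset.inter_comm] at hb
        exact hb
      have := hMmax.1.2 v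
      omega
  have hle := hMmax.2 N hNmatch
  have hw : wsum w N = wsum w M - matchedWeight w M (edgesOf l)
      + unmatchedWeight w M (edgesOf l) := by
    have hM : wsum w M = ∑ e ∈ M \ C, w e + ∑ e ∈ M ∩ C, w e := by
      rw [wsum]
      conv_lhs => rw [← Finset.sdiff_union_inter M C]
      rw [Finset.sum_union (disj_aux M C)]
    rw [hN, wsum, Finset.sum_union disjoint_sdiff_sdiff,
      matched_eq_sum w M _ hnodup, unmatched_eq_sum w M _ hnodup, hM, ← hC,
      Finset.inter_comm]
    ring
  rw [hw] at hle
  rw [Augmenting] at haug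
  linarith

/-- if a proper `M`-augmenting walk `P = (P₁, e_s, P₂, e_t, P₃)` (with `M`
maximum-weight) repeats the edge `e_s = e_t` in the same direction at the first repetition,
then the closed part is alternating, of even length and not `M`-augmenting, and
`(P₁, e_s, P₃)` is a strictly shorter proper `M`-augmenting walk. -/
theorem stmt5 [Fintype V] [DecidableEq V] (G : SimpleGraph V) (w : Sym2 V → ℝ)
    (hw : ∀ e, 0 ≤ w e) (c : V → ℕ) (M : Finset (Sym2 V))
    (hMmax : IsMaxCMatching G w c M)
    (P₁ P₂ P₃ : List (V × V)) (es et : V × V) {u v : V}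
    (hwalk : IsWalkList G (P₁ ++ [es] ++ P₂ ++ [et] ++ P₃))
    (hu : (P₁ ++ [es] ++ P₂ ++ [et] ++ P₃).head?.map Prod.fst = some u)
    (hv : (P₁ ++ [es] ++ P₂ ++ [et] ++ P₃).getLast?.map Prod.snd = some v)
    (halt : Alternating M (edgesOf (P₁ ++ [es] ++ P₂ ++ [et] ++ P₃)))
    (haug : Augmenting w M (edgesOf (P₁ ++ [es] ++ P₂ ++ [et] ++ P₃)))
    (hpu : ProperEnd M c (P₁ ++ [es] ++ P₂ ++ [et] ++ P₃) u)
    (hpv : ProperEnd M c (P₁ ++ [es] ++ P₂ ++ [et] ++ P₃) v)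
    -- `e_t` is the first repetition of an edge, and it repeats `e_s` in the same direction
    (hfirst : (edgesOf (P₁ ++ [es] ++ P₂)).Nodup) (hrep : et = es) :
    -- the closed part `(P₂, e_t)` is `M`-alternating, of even length, and not `M`-augmenting
    (Alternating M (edgesOf (P₂ ++ [et])) ∧ Even (P₂ ++ [et]).length ∧
      ¬ Augmenting w M (edgesOf (P₂ ++ [et]))) ∧
    -- `(P₁, e_s, P₃)` is a strictly shorter proper `M`-augmenting walk from `u` to `v`
    (IsWalkList G (P₁ ++ [es] ++ P₃) ∧
      (P₁ ++ [es] ++ P₃).head?.map Prod.fst = some u ∧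
      (P₁ ++ [es] ++ P₃).getLast?.map Prod.snd = some v ∧
      Alternating M (edgesOf (P₁ ++ [es] ++ P₃)) ∧
      Augmenting w M (edgesOf (P₁ ++ [es] ++ P₃)) ∧
      ProperEnd M c (P₁ ++ [es] ++ P₃) u ∧ ProperEnd M c (P₁ ++ [es] ++ P₃) v ∧
      (P₁ ++ [es] ++ P₃).length < (P₁ ++ [es] ++ P₂ ++ [et] ++ P₃).length) := by
  subst hrep
  set e : Sym2 V := s(et.1, et.2) with hedef
  -- alternation of the closed part
  have halt_cyc : Alternating M (edgesOf (P₂ ++ [et])) :=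
    List.IsChain.infix halt ⟨edgesOf P₁ ++ [e], edgesOf P₃, by simp [edgesOf, hedef]⟩
  have halt_closed : Alternating M (e :: edgesOf P₂ ++ [e]) :=
    List.IsChain.infix halt ⟨edgesOf P₁, edgesOf P₃, by simp [edgesOf, hedef]⟩
  have heven' : Even ((edgesOf P₂).length + 1) := alt_closed_even M e (edgesOf P₂) halt_closed
  have hlenP2 : (edgesOf P₂).length = P₂.length := by simp [edgesOf]
  have heven : Even ((P₂ ++ [et]).length) := by
    simp only [List.length_append, List.length_cons, List.length_nil]
    rw [hlenP2] at heven'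
    simpa using heven'
  have hP2ne : P₂ ≠ [] := by
    intro h
    subst h
    simp [edgesOf] at heven'
  obtain ⟨d₂, P₂', rfl⟩ := List.exists_cons_of_ne_nil hP2ne
  have hchain := hwalk.2
  have hchain_cyc : List.Chain' (fun a b => a.2 = b.1) ((d₂ :: P₂') ++ [et]) :=
    hchain.infix ⟨P₁ ++ [et], P₃, by simp⟩
  have hchain_esP2 : List.Chain' (fun a b => a.2 = b.1) (et :: (d₂ :: P₂')) :=
    hchain.infix ⟨P₁, [et] ++ P₃, by simp⟩
  have hlink2 : et.2 = d₂.1 := hchain_esP2.rel_head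
  have hcyc_ne : (d₂ :: P₂') ++ [et] ≠ [] := by simp
  have hclose : (((d₂ :: P₂') ++ [et]).head hcyc_ne).1 = (((d₂ :: P₂') ++ [et]).getLast hcyc_ne).2 := by
    have h1 : ((d₂ :: P₂') ++ [et]).head hcyc_ne = d₂ := rfl
    have h2 : ((d₂ :: P₂') ++ [et]).getLast hcyc_ne = et := List.getLast_append _
    rw [h1, h2, ← hlink2]
  have hadj_cyc : ∀ d ∈ (d₂ :: P₂') ++ [et], G.Adj d.1 d.2 := by
    intro d hd
    apply hwalk.1
    simp only [List.mem_append, List.mem_cons, List.mem_singleton] at hd ⊢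
    tauto
  have hnodup_cyc : (edgesOf ((d₂ :: P₂') ++ [et])).Nodup := by
    have h1 : (edgesOf P₁ ++ (e :: edgesOf (d₂ :: P₂'))).Nodup := by
      have : edgesOf (P₁ ++ [et] ++ (d₂ :: P₂')) = edgesOf P₁ ++ (e :: edgesOf (d₂ :: P₂')) := by
        simp [edgesOf, hedef]
      rw [← this]
      exact hfirst
    have h2 : (e :: edgesOf (d₂ :: P₂')).Nodup :=
      h1.sublist (List.sublist_append_right _ _)
    have h3 : edgesOf ((d₂ :: P₂') ++ [et]) = edgesOf (d₂ :: P₂') ++ [e] := by simp [edgesOf, hedef]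
    rw [h3]
    exact (List.perm_append_comm.nodup_iff).mpr h2
  have hbal := fun v => occ_bal M ((d₂ :: P₂') ++ [et]) hcyc_ne
    (fun d hd => (hadj_cyc d hd).ne) hchain_cyc halt_cyc hclose heven v
  have hnotaug_cyc : ¬ Augmenting w M (edgesOf ((d₂ :: P₂') ++ [et])) :=
    cycle_not_aug c hMmax _ hcyc_ne hadj_cyc hchain_cyc halt_cyc hclose heven hnodup_cyc
  -- short walk facts
  have hchain_pre : List.Chain' (fun a b => a.2 = b.1) (P₁ ++ [et]) :=
    hchain.prefix ⟨(d₂ :: P₂') ++ [et] ++ P₃, by simp⟩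
  have hchain_suf : List.Chain' (fun a b => a.2 = b.1) (et :: P₃) :=
    hchain.suffix ⟨P₁ ++ [et] ++ (d₂ :: P₂'), by simp⟩
  have hchain_short : List.Chain' (fun a b => a.2 = b.1) ((P₁ ++ [et]) ++ P₃) := by
    apply hchain_pre.append (List.isChain_cons.mp hchain_suf).2
    intro x hx y hy
    have hx' : x = et := by
      rw [List.getLast?_concat] at hx
      exact (by simpa using hx : et = x).symm
    subst hx'
    exact (List.isChain_cons.mp hchain_suf).1 y hy
  have hshortwalk : IsWalkList G (P₁ ++ [et] ++ P₃) := by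
    constructor
    · intro d hd
      apply hwalk.1
      simp only [List.mem_append, List.mem_singleton] at hd ⊢
      tauto
    · exact hchain_short
  have hu' : (P₁ ++ [et] ++ P₃).head?.map Prod.fst = some u := by
    have hh : (P₁ ++ [et] ++ P₃).head? = (P₁ ++ [et] ++ (d₂ :: P₂') ++ [et] ++ P₃).head? := by
      cases P₁ <;> simp
    rw [hh]
    exact hu
  have hlast_irrel : ∀ (l₁ l₂ : List (V × V)) (x : V × V) (l₃ : List (V × V)),
      ((l₁ ++ [x]) ++ l₃).getLast? = ((l₂ ++ [x]) ++ l₃).getLast? := by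
    intro l₁ l₂ x l₃
    have h : ∀ l : List (V × V), ((l ++ [x]) ++ l₃).getLast? = l₃.getLast?.or (some x) := by
      intro l
      rw [List.getLast?_append, List.getLast?_concat]
    rw [h l₁, h l₂]
  have hv' : (P₁ ++ [et] ++ P₃).getLast?.map Prod.snd = some v := by
    rw [hlast_irrel P₁ (P₁ ++ [et] ++ (d₂ :: P₂')) et P₃]
    exact hv
  -- alternation of the short walk
  have halt_pre : List.Chain' (fun e f => (e ∈ M ↔ f ∉ M)) (edgesOf P₁ ++ [e]) :=
    List.IsChain.prefix halt ⟨edgesOf (d₂ :: P₂') ++ [e] ++ edgesOf P₃, by simp [edgesOf, hedef]⟩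
  have halt_suf : List.Chain' (fun e f => (e ∈ M ↔ f ∉ M)) (e :: edgesOf P₃) :=
    List.IsChain.suffix halt ⟨edgesOf P₁ ++ [e] ++ edgesOf (d₂ :: P₂'), by simp [edgesOf, hedef]⟩
  have halt_short : Alternating M (edgesOf (P₁ ++ [et] ++ P₃)) := by
    have hrw : edgesOf (P₁ ++ [et] ++ P₃) = (edgesOf P₁ ++ [e]) ++ edgesOf P₃ := by
      simp [edgesOf, hedef]
    rw [Alternating, hrw]
    apply halt_pre.append (List.isChain_cons.mp halt_suf).2
    intro x hx y hy
    have hx' : x = e := by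
      rw [List.getLast?_concat] at hx
      exact (by simpa using hx : e = x).symm
    subst hx'
    exact (List.isChain_cons.mp halt_suf).1 y hy
  -- augmenting for the short walk
  have hmw : matchedWeight w M (edgesOf (P₁ ++ [et] ++ (d₂ :: P₂') ++ [et] ++ P₃))
      = matchedWeight w M (edgesOf (P₁ ++ [et] ++ P₃))
        + matchedWeight w M (edgesOf ((d₂ :: P₂') ++ [et])) := by
    simp only [matchedWeight, edgesOf, List.map_append, List.filter_append, List.sum_append]
    ring
  have humw : unmatchedWeight w M (edgesOf (P₁ ++ [et] ++ (d₂ :: P₂') ++ [et] ++ P₃))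
      = unmatchedWeight w M (edgesOf (P₁ ++ [et] ++ P₃))
        + unmatchedWeight w M (edgesOf ((d₂ :: P₂') ++ [et])) := by
    simp only [unmatchedWeight, edgesOf, List.map_append, List.filter_append, List.sum_append]
    ring
  have hcycineq : unmatchedWeight w M (edgesOf ((d₂ :: P₂') ++ [et]))
      ≤ matchedWeight w M (edgesOf ((d₂ :: P₂') ++ [et])) := not_lt.mp hnotaug_cyc
  have haug_short : Augmenting w M (edgesOf (P₁ ++ [et] ++ P₃)) := by
    rw [Augmenting] at haug ⊢
    rw [hmw, humw] at haug
    linarith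
  -- properness
  have hocc : ∀ (z : V) (b : Bool), occAt M (P₁ ++ [et] ++ (d₂ :: P₂') ++ [et] ++ P₃) z b
      = occAt M (P₁ ++ [et] ++ P₃) z b + occAt M ((d₂ :: P₂') ++ [et]) z b := by
    intro z b
    simp only [occAt_append]
    ring
  have hprop : ∀ z : V, ProperEnd M c (P₁ ++ [et] ++ (d₂ :: P₂') ++ [et] ++ P₃) z →
      ProperEnd M c (P₁ ++ [et] ++ P₃) z := by
    intro z hz
    rw [ProperEnd] at hz ⊢
    rw [hocc z true, hocc z false] at hz
    have hb := hbal z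
    push_cast at hz ⊢
    omega
  refine ⟨⟨halt_cyc, heven, hnotaug_cyc⟩,
    hshortwalk, hu', hv', halt_short, haug_short, hprop u hpu, hprop v hpv, ?_⟩
  simp only [List.length_append, List.length_cons, List.length_nil]
  omega
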